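/- Let f : [a,b] → ℝ be of constant sign with |f| decreasing, and g : [a,b] → ℂ continuous, with I = ∫_a^b f(x) g(x) dx = |I| e^{iθ}. Then there exists c ∈ [a,b] with |I| = f(a) · Re(e^{-iθ} ∫_a^c g(x) dx) ≤ |f(a) ∫_a^c g(x) dx|. -/

import Mathlib

open MeasureTheory Set intervalIntegral

lemma bonnet (a b : ℝ) (hab : a ≤ b) (f h : ℝ → ℝ) (hf : Antitone f)
    (hfb : 0 ≤ f b) (hh : Continuous h) :
    ∃ c ∈ Set.Icc a b, ∫ x in a..b, f x * h x = f a * ∫ x in a..c, h x := by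
  have hfa0 : 0 ≤ f a := le_trans hfb (hf hab)
  have hfnn : ∀ x ∈ Set.Icc a b, 0 ≤ f x := fun x hx => le_trans hfb (hf hx.2)
  set G : ℝ → ℝ := fun c => ∫ x in a..c, h x with hGdef
  have hG : Continuous G :=
    intervalIntegral.continuous_primitive (fun _ _ => hh.intervalIntegrable _ _) a
  have hGa : G a = 0 := intervalIntegral.integral_same
  obtain ⟨c₁, hc₁, hmin⟩ := isCompact_Icc.exists_isMinOn (α := ℝ) ⟨a, left_mem_Icc.2 hab⟩
    hG.continuousOn
  obtain ⟨c₂, hc₂, hmax⟩ := isCompact_Icc.exists_isMaxOn (α := ℝ) ⟨a, left_mem_Icc.2 hab⟩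
    hG.continuousOn
  set m := G c₁
  set M := G c₂
  have hm0 : m ≤ 0 := hGa ▸ hmin (left_mem_Icc.2 hab)
  have hM0 : 0 ≤ M := hGa ▸ hmax (left_mem_Icc.2 hab)
  -- the 2D region
  set S : Set (ℝ × ℝ) := {p | p.2 ∈ Set.Ioc a b ∧ 0 < p.1 ∧ p.1 < f p.2} with hSdef
  have hSm : MeasurableSet S := by
    have h1 : MeasurableSet {p : ℝ × ℝ | p.2 ∈ Set.Ioc a b} :=
      measurable_snd measurableSet_Ioc
    have h2 : MeasurableSet {p : ℝ × ℝ | 0 < p.1} := measurable_fst measurableSet_Ioi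
    have h3 : MeasurableSet {p : ℝ × ℝ | p.1 < f p.2} :=
      measurableSet_lt measurable_fst (hf.measurable.comp measurable_snd)
    have : S = {p : ℝ × ℝ | p.2 ∈ Set.Ioc a b} ∩ ({p : ℝ × ℝ | 0 < p.1} ∩ {p : ℝ × ℝ | p.1 < f p.2}) := by
      ext p; simp [hSdef, Set.mem_Ioi, and_assoc]
    rw [this]; exact h1.inter (h2.inter h3)
  set ψ : ℝ × ℝ → ℝ := S.indicator (fun p => h p.2) with hψdef
  have hψm : AEStronglyMeasurable ψ (volume.prod volume) :=
    ((hh.comp continuous_snd).aestronglyMeasurable).indicator hSm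
  obtain ⟨C, hC⟩ := isCompact_Icc.exists_bound_of_continuousOn hh.continuousOn (s := Set.Icc a b)
  have hC0 : 0 ≤ C := le_trans (norm_nonneg (h a)) (hC a (left_mem_Icc.2 hab))
  have hψint : Integrable ψ (volume.prod volume) := by
    refine Integrable.mono'
      (g := (Set.Ioc 0 (f a) ×ˢ Set.Ioc a b).indicator fun _ => C) ?_ hψm ?_
    · rw [integrable_indicator_iff (measurableSet_Ioc.prod measurableSet_Ioc)]
      refine integrableOn_const (ne_of_lt ?_)
      rw [Measure.prod_prod]
      exact ENNReal.mul_lt_top measure_Ioc_lt_top measure_Ioc_lt_top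
    · refine Filter.Eventually.of_forall fun p => ?_
      by_cases hp : p ∈ S
      · have h1 : ψ p = h p.2 := Set.indicator_of_mem hp _
        have hmem : p ∈ Set.Ioc 0 (f a) ×ˢ Set.Ioc a b := by
          refine ⟨⟨hp.2.1, le_trans hp.2.2.le (hf hp.1.1.le)⟩, hp.1⟩
        rw [h1, Set.indicator_of_mem hmem]
        exact hC p.2 ⟨hp.1.1.le, hp.1.2⟩
      · rw [hψdef, Set.indicator_of_notMem hp]
        simpa using Set.indicator_nonneg (fun _ _ => hC0) p
  set φ : ℝ → ℝ := fun t => ∫ x, ψ (t, x) with hφdef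
  -- Fubini: total integral equals ∫ f h
  have key1 : ∫ t, φ t = ∫ x in a..b, f x * h x := by
    have hswap : ∫ t, ∫ x, ψ (t, x) = ∫ x, ∫ t, ψ (t, x) := by
      apply integral_integral_swap
      exact hψint
    rw [hφdef]
    simp only []
    rw [hswap]
    have hinner : ∀ x, (∫ t, ψ (t, x)) = (Set.Ioc a b).indicator (fun x => f x * h x) x := by
      intro x
      by_cases hx : x ∈ Set.Ioc a b
      · have : (fun t => ψ (t, x)) = (Set.Ioo 0 (f x)).indicator (fun _ => h x) := by
          funext t
          by_cases ht : t ∈ Set.Ioo 0 (f x)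
          · rw [Set.indicator_of_mem ht]
            exact Set.indicator_of_mem (show (t,x) ∈ S from ⟨hx, ht.1, ht.2⟩) _
          · rw [Set.indicator_of_notMem ht]
            refine Set.indicator_of_notMem ?_ _
            intro hc
            exact ht ⟨hc.2.1, hc.2.2⟩
        rw [this, integral_indicator_const _ measurableSet_Ioo, Set.indicator_of_mem hx]
        rw [Measure.real, Real.volume_Ioo]
        rw [ENNReal.toReal_ofReal (by linarith [hfnn x ⟨hx.1.le, hx.2⟩])]
        simp only [sub_zero, smul_eq_mul]
      · have : (fun t => ψ (t, x)) = fun _ => 0 := by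
          funext t
          refine Set.indicator_of_notMem ?_ _
          intro hc
          exact hx hc.1
        rw [this, MeasureTheory.integral_zero, Set.indicator_of_notMem hx]
    simp_rw [hinner]
    rw [MeasureTheory.integral_indicator measurableSet_Ioc, intervalIntegral.integral_of_le hab]
  -- pointwise bounds on φ
  have hφbnd : ∀ t, m ≤ φ t ∧ φ t ≤ M := by
    intro t
    by_cases ht : 0 < t
    · set A : Set ℝ := {x | x ∈ Set.Ioc a b ∧ t < f x} with hAdef
      have hA : MeasurableSet A :=
        measurableSet_Ioc.inter (measurableSet_lt measurable_const hf.measurable)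
      have hψt : (fun x => ψ (t, x)) = A.indicator h := by
        funext x
        by_cases hx : x ∈ A
        · rw [Set.indicator_of_mem hx]
          exact Set.indicator_of_mem (show (t,x) ∈ S from ⟨hx.1, ht, hx.2⟩) _
        · rw [Set.indicator_of_notMem hx]
          refine Set.indicator_of_notMem ?_ _
          intro hc
          exact hx ⟨hc.1, hc.2.2⟩
      set s := sSup (insert a A) with hsdef
      have hbdd : BddAbove (insert a A) := by
        refine ⟨b, fun y hy => ?_⟩
        rcases hy with rfl | hy
        · exact hab
        · exact hy.1.2
      have hsa : a ≤ s := le_csSup hbdd (Set.mem_insert _ _)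
      have hsb : s ≤ b := csSup_le (Set.insert_nonempty _ _)
        (fun y hy => by rcases hy with rfl | hy; exacts [hab, hy.1.2])
      have hsub1 : Set.Ioo a s ⊆ A := by
        intro x hx
        obtain ⟨y, hy, hxy⟩ := exists_lt_of_lt_csSup (Set.insert_nonempty _ _) hx.2
        rcases hy with rfl | hy
        · exact absurd hxy (not_lt.2 hx.1.le)
        · exact ⟨⟨hx.1, le_trans hxy.le hy.1.2⟩, lt_of_lt_of_le hy.2 (hf hxy.le)⟩
      have hsub2 : A ⊆ Set.Ioc a s := fun x hx =>
        ⟨hx.1.1, le_csSup hbdd (Set.mem_insert_of_mem _ hx)⟩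
      have hAae : A =ᵐ[volume] Set.Ioc a s := by
        rw [MeasureTheory.ae_eq_set]
        constructor
        · refine measure_mono_null (t := (∅ : Set ℝ)) ?_ measure_empty
          intro x hx; exact hx.2 (hsub2 hx.1)
        · refine measure_mono_null (t := {s}) ?_ (measure_singleton s)
          intro x hx
          rcases eq_or_lt_of_le hx.1.2 with heq | hlt
          · exact heq
          · exact absurd (hsub1 ⟨hx.1.1, hlt⟩) hx.2
      have hφt : φ t = G s := by
        rw [hφdef]
        simp only []
        rw [hψt, MeasureTheory.integral_indicator hA, setIntegral_congr_set hAae,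
          ← intervalIntegral.integral_of_le hsa]
      rw [hφt]
      exact ⟨hmin ⟨hsa, hsb⟩, hmax ⟨hsa, hsb⟩⟩
    · have : (fun x => ψ (t, x)) = fun _ => 0 := by
        funext x
        refine Set.indicator_of_notMem ?_ _
        intro hc
        exact ht hc.2.1
      have hφt : φ t = 0 := by rw [hφdef]; simp only []; rw [this, MeasureTheory.integral_zero]
      rw [hφt]; exact ⟨hm0, hM0⟩
  -- support of φ
  have hsupp : ∀ t ∉ Set.Ioc 0 (f a), φ t = 0 := by
    intro t ht
    have : (fun x => ψ (t, x)) = fun _ => 0 := by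
      funext x
      refine Set.indicator_of_notMem ?_ _
      intro hc
      exact ht ⟨hc.2.1, le_trans hc.2.2.le (hf hc.1.1.le)⟩
    rw [hφdef]; simp only []; rw [this, MeasureTheory.integral_zero]
  have hφint : Integrable φ volume := hψint.integral_prod_left
  have hIoc : (volume (Set.Ioc (0:ℝ) (f a))).toReal = f a := by
    rw [Real.volume_Ioc, ENNReal.toReal_ofReal (by linarith)]
    ring_nf
  have hrestr : ∫ t, φ t = ∫ t in Set.Ioc 0 (f a), φ t :=
    (setIntegral_eq_integral_of_forall_compl_eq_zero (fun t htc => hsupp t htc)).symm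
  have hub : ∫ t, φ t ≤ f a * M := by
    rw [hrestr]
    calc ∫ t in Set.Ioc 0 (f a), φ t ≤ ∫ _ in Set.Ioc 0 (f a), M :=
          setIntegral_mono_on hφint.integrableOn (integrableOn_const
            measure_Ioc_lt_top.ne) measurableSet_Ioc (fun t _ => (hφbnd t).2)
      _ = f a * M := by rw [setIntegral_const, Measure.real, hIoc, smul_eq_mul]
  have hlb : f a * m ≤ ∫ t, φ t := by
    rw [hrestr]
    calc (f a) * m = ∫ _ in Set.Ioc 0 (f a), m := by rw [setIntegral_const, Measure.real, hIoc, smul_eq_mul]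
      _ ≤ ∫ t in Set.Ioc 0 (f a), φ t :=
          setIntegral_mono_on (integrableOn_const measure_Ioc_lt_top.ne)
            hφint.integrableOn measurableSet_Ioc (fun t _ => (hφbnd t).1)
  -- intermediate value
  have hmM : f a * m ≤ f a * M := le_trans hlb hub
  have hIVT := intermediate_value_uIcc (a := c₁) (b := c₂) (f := fun c => f a * G c)
    (continuous_const.mul hG).continuousOn
  have hmem : (∫ x in a..b, f x * h x) ∈ Set.uIcc (f a * G c₁) (f a * G c₂) := by
    rw [Set.uIcc_of_le hmM]
    exact ⟨key1 ▸ hlb, key1 ▸ hub⟩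
  obtain ⟨c, hc, hGc⟩ := hIVT hmem
  refine ⟨c, ?_, hGc.symm⟩
  have : Set.uIcc c₁ c₂ ⊆ Set.Icc a b := by
    rw [← Set.uIcc_of_le hab]
    exact Set.uIcc_subset_uIcc (by rw [Set.uIcc_of_le hab]; exact hc₁)
      (by rw [Set.uIcc_of_le hab]; exact hc₂)
  exact this hc

lemma bonnet2 (a b : ℝ) (hab : a ≤ b) (f h : ℝ → ℝ)
    (hpos : ∀ x ∈ Set.Icc a b, 0 ≤ f x) (hant : AntitoneOn f (Set.Icc a b))
    (hh : Continuous h) :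
    ∃ c ∈ Set.Icc a b, ∫ x in a..b, f x * h x = f a * ∫ x in a..c, h x := by
  set F : ℝ → ℝ := fun x => f (max a (min x b)) with hFdef
  have hproj : ∀ x, max a (min x b) ∈ Set.Icc a b :=
    fun x => ⟨le_max_left _ _, max_le hab (min_le_right _ _)⟩
  have hprojeq : ∀ x ∈ Set.Icc a b, max a (min x b) = x := by
    intro x hx
    rw [min_eq_left hx.2, max_eq_right hx.1]
  have hFeq : ∀ x ∈ Set.Icc a b, F x = f x := fun x hx => by rw [hFdef]; simp [hprojeq x hx]
  have hFant : Antitone F := by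
    intro x y hxy
    exact hant (hproj x) (hproj y) (max_le_max le_rfl (min_le_min_right _ hxy))
  have hFb : 0 ≤ F b := (hFeq b (right_mem_Icc.2 hab)) ▸ hpos b (right_mem_Icc.2 hab)
  obtain ⟨c, hc, hceq⟩ := bonnet a b hab F h hFant hFb hh
  refine ⟨c, hc, ?_⟩
  have h1 : ∫ x in a..b, f x * h x = ∫ x in a..b, F x * h x := by
    refine intervalIntegral.integral_congr fun x hx => ?_
    rw [Set.uIcc_of_le hab] at hx
    rw [hFeq x hx]
  rw [h1, hceq, hFeq a (left_mem_Icc.2 hab)]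

lemma bonnet3 (a b : ℝ) (hab : a ≤ b) (f h : ℝ → ℝ)
    (hsign : (∀ x ∈ Set.Icc a b, 0 ≤ f x) ∨ (∀ x ∈ Set.Icc a b, f x ≤ 0))
    (hdec : AntitoneOn (fun x => |f x|) (Set.Icc a b))
    (hh : Continuous h) :
    ∃ c ∈ Set.Icc a b, ∫ x in a..b, f x * h x = f a * ∫ x in a..c, h x := by
  rcases hsign with hpos | hneg
  · have hant : AntitoneOn f (Set.Icc a b) := by
      intro x hx y hy hxy
      have := hdec hx hy hxy
      simp only at this
      rwa [abs_of_nonneg (hpos x hx), abs_of_nonneg (hpos y hy)] at this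
    exact bonnet2 a b hab f h hpos hant hh
  · have hant : AntitoneOn (fun x => -f x) (Set.Icc a b) := by
      intro x hx y hy hxy
      have := hdec hx hy hxy
      simp only at this
      rw [abs_of_nonpos (hneg x hx), abs_of_nonpos (hneg y hy)] at this
      simpa using this
    obtain ⟨c, hc, hceq⟩ := bonnet2 a b hab (fun x => -f x) h
      (fun x hx => neg_nonneg.2 (hneg x hx)) hant hh
    refine ⟨c, hc, ?_⟩
    have h1 : ∫ x in a..b, f x * h x = -∫ x in a..b, (-f x) * h x := by
      rw [← intervalIntegral.integral_neg]
      congr 1; funext x; ring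
    rw [h1, hceq]; ring

theorem complex_second_mean_value_decreasing (a b : ℝ) (hab : a ≤ b) (f : ℝ → ℝ) (g : ℝ → ℂ)
    (hsign : (∀ x ∈ Set.Icc a b, 0 ≤ f x) ∨ (∀ x ∈ Set.Icc a b, f x ≤ 0))
    (hdec : AntitoneOn (fun x => |f x|) (Set.Icc a b))
    (hg : ContinuousOn g (Set.Icc a b)) :
    ∃ c ∈ Set.Icc a b,
      ‖∫ x in a..b, (f x : ℂ) * g x‖ =
        f a * (Complex.exp (-((∫ x in a..b, (f x : ℂ) * g x).arg : ℂ) * Complex.I) *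
            ∫ x in a..c, g x).re ∧
      ‖∫ x in a..b, (f x : ℂ) * g x‖ ≤
        ‖(f a : ℂ) * ∫ x in a..c, g x‖ := by
  set I : ℂ := ∫ x in a..b, (f x : ℂ) * g x with hIdef
  set e : ℂ := Complex.exp (-(I.arg : ℂ) * Complex.I) with hedef
  -- continuous extension of g
  set gt : ℝ → ℂ := Set.IccExtend hab ((Set.Icc a b).restrict g) with hgtdef
  have hgtc : Continuous gt := (continuousOn_iff_continuous_restrict.1 hg).Icc_extend'
  have hgteq : ∀ x ∈ Set.Icc a b, gt x = g x := by
    intro x hx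
    rw [hgtdef, Set.IccExtend_of_mem hab _ hx]
    rfl
  set h : ℝ → ℝ := fun x => (e * gt x).re with hhdef
  have hhc : Continuous h := Complex.continuous_re.comp (continuous_const.mul hgtc)
  obtain ⟨c, hc, hkey⟩ := bonnet3 a b hab f h hsign hdec hhc
  -- integrability of f
  have hfint : IntervalIntegrable f volume a b := by
    rcases hsign with hpos | hneg
    · have hant : AntitoneOn f (Set.uIcc a b) := by
        rw [Set.uIcc_of_le hab]
        intro x hx y hy hxy
        have := hdec hx hy hxy
        simp only at this
        rwa [abs_of_nonneg (hpos x hx), abs_of_nonneg (hpos y hy)] at this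
      exact hant.intervalIntegrable
    · have hant : AntitoneOn (fun x => -f x) (Set.uIcc a b) := by
        rw [Set.uIcc_of_le hab]
        intro x hx y hy hxy
        have := hdec hx hy hxy
        simp only at this
        rw [abs_of_nonpos (hneg x hx), abs_of_nonpos (hneg y hy)] at this
        simpa using this
      have := (hant.intervalIntegrable (μ := volume)).neg
      have heq : (-fun x => -f x) = f := by funext x; simp
      rwa [heq] at this
  have hfgint : IntervalIntegrable (fun x => (f x : ℂ) * g x) volume a b := by
    refine IntervalIntegrable.mul_continuousOn ?_ (by rwa [Set.uIcc_of_le hab])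
    exact ⟨hfint.1.ofReal, hfint.2.ofReal⟩
  -- abs I = (e*I).re
  have hEI : e * I = ((‖I‖ : ℝ) : ℂ) := by
    conv_lhs => rw [← Complex.norm_mul_exp_arg_mul_I I]
    rw [hedef, mul_comm, mul_assoc, ← Complex.exp_add,
      show (I.arg : ℂ) * Complex.I + -(I.arg : ℂ) * Complex.I = 0 by ring,
      Complex.exp_zero, mul_one]
  have habsI : ‖I‖ = (e * I).re := by rw [hEI, Complex.ofReal_re]
  -- (e*I).re = ∫ f h
  have hre : (e * I).re = ∫ x in a..b, f x * h x := by
    have h1 : e * I = ∫ x in a..b, e * ((f x : ℂ) * g x) := by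
      rw [hIdef, intervalIntegral.integral_const_mul]
    have h2 : (∫ x in a..b, e * ((f x : ℂ) * g x)).re
        = ∫ x in a..b, (e * ((f x : ℂ) * g x)).re := by
      have := Complex.reCLM.intervalIntegral_comp_comm (hfgint.const_mul e)
      simpa using this.symm
    rw [h1, h2]
    refine intervalIntegral.integral_congr fun x hx => ?_
    rw [Set.uIcc_of_le hab] at hx
    rw [hhdef]
    simp only []
    rw [← hgteq x hx] at *
    rw [show e * ((f x : ℂ) * gt x) = (f x : ℂ) * (e * gt x) by ring, Complex.re_ofReal_mul]
  -- ∫ h over a..c equals re of e * ∫ g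
  have hac : Set.uIcc a c ⊆ Set.Icc a b := by
    rw [Set.uIcc_of_le hc.1]
    exact Set.Icc_subset_Icc le_rfl hc.2
  have hgcint : IntervalIntegrable g volume a c := (hg.mono hac).intervalIntegrable
  have hhc2 : ∫ x in a..c, h x = (e * ∫ x in a..c, g x).re := by
    have h1 : ∫ x in a..c, h x = ∫ x in a..c, (e * g x).re := by
      refine intervalIntegral.integral_congr fun x hx => ?_
      rw [hhdef]
      simp only []
      rw [hgteq x (hac hx)]
    have h2 : (∫ x in a..c, e * g x).re = ∫ x in a..c, (e * g x).re := by
      have := Complex.reCLM.intervalIntegral_comp_comm (hgcint.const_mul e)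
      simpa using this.symm
    rw [h1, ← h2, intervalIntegral.integral_const_mul]
  have hmain : ‖I‖ = f a * (e * ∫ x in a..c, g x).re := by
    rw [habsI, hre, hkey, hhc2]
  refine ⟨c, hc, hmain, ?_⟩
  set J : ℂ := ∫ x in a..c, g x
  have habs_e : ‖e‖ = 1 := by
    rw [hedef, show -(I.arg : ℂ) = ((-I.arg : ℝ) : ℂ) by push_cast; ring]
    exact Complex.norm_exp_ofReal_mul_I _
  calc ‖I‖ = f a * (e * J).re := hmain
    _ ≤ |f a * (e * J).re| := le_abs_self _
    _ = |f a| * |(e * J).re| := abs_mul _ _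
    _ ≤ |f a| * ‖e * J‖ :=
        mul_le_mul_of_nonneg_left (Complex.abs_re_le_norm _) (abs_nonneg _)
    _ = |f a| * ‖J‖ := by rw [norm_mul, habs_e, one_mul]
    _ = ‖(f a : ℂ) * J‖ := by rw [norm_mul, Complex.norm_real, Real.norm_eq_abs]
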